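/- Let u₀ : ℝ → ℝ be measurable and locally integrable with u_m ≤ u₀(x) ≤ u_M for all x, let c ∈ ℝ, Δx > 0, Δt > 0, λ = Δt/Δx, and fix x₊ ∈ ℝ with x₋ = x₊ − Δx. Define ū_j = (1/Δx)∫_{x₋}^{x₊} u₀(x) dx, f̌₊ = (c/Δt)∫₀^{Δt} u₀(x₊ − c t) dt, and f̌₋ = (c/Δt)∫₀^{Δt} u₀(x₋ − c t) dt. Then the exact-flux cell-average update satisfies the maximum principle: u_m ≤ ū_j − λ·(f̌₊ − f̌₋) ≤ u_M. -/

import Mathlib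

open MeasureTheory intervalIntegral

theorem exact_flux_update_maximum_principle
    (u₀ : ℝ → ℝ) (hmeas : Measurable u₀) (hu : MeasureTheory.LocallyIntegrable u₀)
    (u_m u_M : ℝ) (hbound : ∀ x, u_m ≤ u₀ x ∧ u₀ x ≤ u_M)
    (c Δx Δt lam xp xm : ℝ) (hΔx : 0 < Δx) (hΔt : 0 < Δt)
    (hlam : lam = Δt / Δx) (hx : xm = xp - Δx)
    (ubar : ℝ) (hubar : ubar = (1 / Δx) * ∫ x in xm..xp, u₀ x)
    (fp fm : ℝ)
    (hfp : fp = (c / Δt) * ∫ t in (0:ℝ)..Δt, u₀ (xp - c * t))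
    (hfm : fm = (c / Δt) * ∫ t in (0:ℝ)..Δt, u₀ (xm - c * t)) :
    u_m ≤ ubar - lam * (fp - fm) ∧ ubar - lam * (fp - fm) ≤ u_M := by
  have hint : ∀ a b : ℝ, IntervalIntegrable u₀ volume a b := fun a b =>
    (hu.integrableOn_isCompact isCompact_uIcc).intervalIntegrable
  -- key substitution identity
  have key : ∀ y : ℝ, c * (∫ t in (0:ℝ)..Δt, u₀ (y - c * t))
      = ∫ s in (y - c * Δt)..y, u₀ s := by
    intro y
    rcases eq_or_ne c 0 with hc | hc
    · simp [hc]
    · have h1 : (∫ t in (0:ℝ)..Δt, u₀ (y - c * t))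
          = c⁻¹ • ∫ s in (c * 0)..(c * Δt), u₀ (y - s) := by
        rw [← intervalIntegral.integral_comp_mul_left (fun s => u₀ (y - s)) hc]
      have h2 : (∫ s in (c * 0)..(c * Δt), u₀ (y - s))
          = ∫ s in (y - c * Δt)..(y - c * 0), u₀ s :=
        intervalIntegral.integral_comp_sub_left u₀ y
      rw [h1, h2, smul_eq_mul]
      field_simp
      rw [mul_zero, sub_zero]
  -- rewrite the update as the cell average of the shifted solution
  have hupdate : ubar - lam * (fp - fm)
      = (1 / Δx) * ∫ s in (xm - c * Δt)..(xp - c * Δt), u₀ s := by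
    have hfp' : lam * fp = (1 / Δx) * ∫ s in (xp - c * Δt)..xp, u₀ s := by
      rw [hfp, hlam, ← key xp]
      field_simp
    have hfm' : lam * fm = (1 / Δx) * ∫ s in (xm - c * Δt)..xm, u₀ s := by
      rw [hfm, hlam, ← key xm]
      field_simp
    have hadd1 : (∫ s in (xm - c * Δt)..xm, u₀ s) + ∫ s in xm..xp, u₀ s
        = ∫ s in (xm - c * Δt)..xp, u₀ s :=
      intervalIntegral.integral_add_adjacent_intervals (hint _ _) (hint _ _)
    have hadd2 : (∫ s in (xm - c * Δt)..(xp - c * Δt), u₀ s)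
        + ∫ s in (xp - c * Δt)..xp, u₀ s = ∫ s in (xm - c * Δt)..xp, u₀ s :=
      intervalIntegral.integral_add_adjacent_intervals (hint _ _) (hint _ _)
    have : (∫ s in xm..xp, u₀ s) - (∫ s in (xp - c * Δt)..xp, u₀ s)
        + ∫ s in (xm - c * Δt)..xm, u₀ s
        = ∫ s in (xm - c * Δt)..(xp - c * Δt), u₀ s := by
      linarith [hadd1, hadd2]
    rw [hubar, mul_sub, hfp', hfm']
    rw [← this]
    ring
  have hab : xm - c * Δt ≤ xp - c * Δt := by linarith
  have hlow : u_m * Δx ≤ ∫ s in (xm - c * Δt)..(xp - c * Δt), u₀ s := by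
    have := intervalIntegral.integral_mono_on hab
      (_root_.intervalIntegrable_const (c := u_m)) (hint _ _)
      (fun x _ => (hbound x).1)
    simpa [hx, intervalIntegral.integral_const, smul_eq_mul, mul_comm,
      show xp - c * Δt - (xm - c * Δt) = Δx by rw [hx]; ring] using this
  have hhigh : (∫ s in (xm - c * Δt)..(xp - c * Δt), u₀ s) ≤ u_M * Δx := by
    have := intervalIntegral.integral_mono_on hab (hint _ _)
      (_root_.intervalIntegrable_const (c := u_M))
      (fun x _ => (hbound x).2)
    simpa [hx, intervalIntegral.integral_const, smul_eq_mul, mul_comm,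
      show xp - c * Δt - (xm - c * Δt) = Δx by rw [hx]; ring] using this
  rw [hupdate]
  constructor
  · rw [ge_iff_le.symm]
    calc u_m = (1 / Δx) * (u_m * Δx) := by field_simp
      _ ≤ (1 / Δx) * ∫ s in (xm - c * Δt)..(xp - c * Δt), u₀ s := by
          apply mul_le_mul_of_nonneg_left hlow (by positivity)
  · calc (1 / Δx) * (∫ s in (xm - c * Δt)..(xp - c * Δt), u₀ s)
        ≤ (1 / Δx) * (u_M * Δx) := mul_le_mul_of_nonneg_left hhigh (by positivity)
      _ = u_M := by field_simp
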